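/- (Sign interpolation at roots of unity.) For every m ∈ ℕ and N = 2^m there exist real numbers α₀, α₁, …, α_{2N−1} with α_ν = 0 for ν even, such that for all k ∈ {0, 1, …, 2N−1}: Σ_{ν=0}^{2N−1} α_ν · exp(kνπi/N) equals i if 1 ≤ k ≤ N−1, equals −i if N+1 ≤ k ≤ 2N−1, and equals 0 if k = 0 or k = N. -/

import Mathlib

open Complex Finset

lemma auxOrth (N : ℕ) (hN : 0 < N) (d : ℤ) :
    ∑ ν ∈ Finset.range (2 * N), Complex.exp (Real.pi * Complex.I * d / N) ^ ν
      = if (2 * N : ℤ) ∣ d then ((2 * N : ℕ) : ℂ) else 0 := by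
  have hN0 : (N : ℂ) ≠ 0 := Nat.cast_ne_zero.mpr hN.ne'
  have hpi : (Real.pi : ℂ) ≠ 0 := by
    exact_mod_cast Real.pi_ne_zero
  by_cases h : (2 * N : ℤ) ∣ d
  · rw [if_pos h]
    obtain ⟨c, rfl⟩ := h
    have h1 : Complex.exp (Real.pi * Complex.I * ((2 * N : ℤ) * c : ℤ) / N) = 1 := by
      have harg : (Real.pi : ℂ) * Complex.I * ((2 * N : ℤ) * c : ℤ) / N
          = (c : ℂ) * (2 * Real.pi * Complex.I) := by
        push_cast
        field_simp
      rw [harg, Complex.exp_int_mul_two_pi_mul_I]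
    rw [h1]
    simp
  · rw [if_neg h]
    set z := Complex.exp (Real.pi * Complex.I * d / N) with hz
    have hz1 : z ≠ 1 := by
      intro hzz
      rw [hz, Complex.exp_eq_one_iff] at hzz
      obtain ⟨n, hn⟩ := hzz
      apply h
      refine ⟨n, ?_⟩
      have : (d : ℂ) = 2 * N * n := by
        field_simp at hn
        have h2 : (Real.pi : ℂ) * Complex.I * d = (Real.pi : ℂ) * Complex.I * (2 * N * n) := by
          linear_combination ((Real.pi : ℂ) * Complex.I) * hn
        exact mul_left_cancel₀ (mul_ne_zero hpi Complex.I_ne_zero) h2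
      exact_mod_cast this
    have hz2N : z ^ (2 * N) = 1 := by
      rw [hz, ← Complex.exp_nat_mul]
      have harg : ((2 * N : ℕ) : ℂ) * (Real.pi * Complex.I * d / N)
          = (d : ℂ) * (2 * Real.pi * Complex.I) := by
        push_cast
        field_simp
      rw [harg, Complex.exp_int_mul_two_pi_mul_I]
    rw [geom_sum_eq hz1, hz2N]
    simp

theorem stmt_18 (m : ℕ) :
    ∃ α : ℕ → ℝ, (∀ ν, Even ν → α ν = 0) ∧
      ∀ k : ℕ, k < 2 * 2 ^ m →
        (∑ ν ∈ Finset.range (2 * 2 ^ m),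
            (α ν : ℂ) *
              Complex.exp ((k : ℂ) * (ν : ℂ) * (Real.pi : ℂ) * Complex.I /
                ((2 : ℂ) ^ m)))
          = if k = 0 ∨ k = 2 ^ m then 0
            else if k < 2 ^ m then Complex.I else -Complex.I := by
  set N : ℕ := 2 ^ m with hNdef
  have hN : 0 < N := pow_pos (by norm_num) m
  have hN0 : (N : ℂ) ≠ 0 := Nat.cast_ne_zero.mpr hN.ne'
  have h2N0 : ((2 * N : ℕ) : ℂ) ≠ 0 := Nat.cast_ne_zero.mpr (by omega)
  set f : ℕ → ℂ := fun j => if j = 0 ∨ j = N then 0 else if j < N then Complex.I else -Complex.I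
    with hf
  set c : ℕ → ℂ := fun ν =>
    (∑ j ∈ Finset.range (2 * N), f j * Complex.exp (-(Real.pi * Complex.I * j * ν / N)))
      / ((2 * N : ℕ) : ℂ) with hc
  refine ⟨fun ν => (c ν).re, ?_, ?_⟩
  · -- even indices vanish
    rintro ν ⟨t, ht⟩
    have hcν : c ν = 0 := by
      rw [hc]
      simp only
      rw [div_eq_zero_iff]
      left
      have hsplit : (2 * N) = N + N := by ring
      rw [hsplit, Finset.sum_range_add]
      have hterm : ∀ j ∈ Finset.range N,
          f (N + j) * Complex.exp (-(Real.pi * Complex.I * (N + j : ℕ) * ν / N))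
            = -(f j * Complex.exp (-(Real.pi * Complex.I * j * ν / N))) := by
        intro j hj
        rw [Finset.mem_range] at hj
        have hfNj : f (N + j) = - f j := by
          rcases Nat.eq_zero_or_pos j with rfl | hjpos
          · simp [hf]
          · have h1 : ¬(N + j = 0 ∨ N + j = N) := by omega
            have h2 : ¬(N + j < N) := by omega
            have h3 : ¬(j = 0 ∨ j = N) := by omega
            simp only [hf, h1, h2, h3, if_false, hj, if_true]
        have hexp : Complex.exp (-(Real.pi * Complex.I * (N + j : ℕ) * ν / N))
            = Complex.exp (-(Real.pi * Complex.I * j * ν / N)) := by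
          have harg : -((Real.pi : ℂ) * Complex.I * (N + j : ℕ) * ν / N)
              = -((Real.pi : ℂ) * Complex.I * j * ν / N) + (-(ν : ℂ)) * Real.pi * Complex.I := by
            push_cast
            field_simp
            ring
          rw [harg, Complex.exp_add]
          have hone : Complex.exp ((-(ν : ℂ)) * Real.pi * Complex.I) = 1 := by
            have harg2 : (-(ν : ℂ)) * Real.pi * Complex.I = ((-t : ℤ) : ℂ) * (2 * Real.pi * Complex.I) := by
              push_cast [ht]
              ring
            rw [harg2, Complex.exp_int_mul_two_pi_mul_I]
          rw [hone, mul_one]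
        rw [hfNj, hexp]
        ring
      rw [Finset.sum_congr rfl hterm, ← Finset.sum_add_distrib]
      simp
    simp [hcν]
  · -- interpolation
    intro k hk
    have h2m : ((2 : ℂ) ^ m) = (N : ℂ) := by
      rw [hNdef]; push_cast; ring
    -- rewrite the exponential
    have hE : ∀ ν : ℕ, Complex.exp ((k : ℂ) * (ν : ℂ) * (Real.pi : ℂ) * Complex.I / ((2 : ℂ) ^ m))
        = Complex.exp (Real.pi * Complex.I * k * ν / N) := by
      intro ν
      rw [h2m]
      ring_nf
    -- key product-to-power identities
    have hA : ∀ (j ν : ℕ),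
        Complex.exp (-(Real.pi * Complex.I * j * ν / N)) * Complex.exp (Real.pi * Complex.I * k * ν / N)
          = Complex.exp (Real.pi * Complex.I * ((((k : ℤ) - (j : ℤ)) : ℤ) : ℂ) / N) ^ ν := by
      intro j ν
      rw [← Complex.exp_nat_mul, ← Complex.exp_add]
      congr 1
      push_cast
      field_simp
      ring
    have hB : ∀ (j ν : ℕ),
        Complex.exp (Real.pi * Complex.I * j * ν / N) * Complex.exp (Real.pi * Complex.I * k * ν / N)
          = Complex.exp (Real.pi * Complex.I * ((((k : ℤ) + (j : ℤ)) : ℤ) : ℂ) / N) ^ ν := by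
      intro j ν
      rw [← Complex.exp_nat_mul, ← Complex.exp_add]
      congr 1
      push_cast
      field_simp
      ring
    -- conjugate of c
    have hconj : ∀ ν : ℕ, (starRingEnd ℂ) (c ν)
        = (∑ j ∈ Finset.range (2 * N),
            (starRingEnd ℂ) (f j) * Complex.exp (Real.pi * Complex.I * j * ν / N))
          / ((2 * N : ℕ) : ℂ) := by
      intro ν
      rw [hc]
      simp only [map_div₀, map_sum, map_mul]
      congr 1
      · refine Finset.sum_congr rfl fun j _ => ?_
        congr 1
        rw [← Complex.exp_conj]
        congr 1
        simp [map_neg, map_div₀, map_mul, Complex.conj_I]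
        ring
      · exact Complex.conj_natCast _
    -- Part A
    have PA : ∑ ν ∈ Finset.range (2 * N), c ν * Complex.exp (Real.pi * Complex.I * k * ν / N)
        = f k := by
      have h1 : ∀ ν ∈ Finset.range (2 * N),
          c ν * Complex.exp (Real.pi * Complex.I * k * ν / N)
            = (∑ j ∈ Finset.range (2 * N),
                f j * Complex.exp (Real.pi * Complex.I * ((((k : ℤ) - (j : ℤ)) : ℤ) : ℂ) / N) ^ ν)
              / ((2 * N : ℕ) : ℂ) := by
        intro ν _
        rw [hc]
        simp only
        rw [div_mul_eq_mul_div, Finset.sum_mul]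
        congr 1
        refine Finset.sum_congr rfl fun j _ => ?_
        rw [mul_assoc, hA j ν]
      rw [Finset.sum_congr rfl h1, ← Finset.sum_div, Finset.sum_comm]
      have h2 : ∀ j ∈ Finset.range (2 * N),
          ∑ ν ∈ Finset.range (2 * N),
              f j * Complex.exp (Real.pi * Complex.I * ((((k : ℤ) - (j : ℤ)) : ℤ) : ℂ) / N) ^ ν
            = f j * (if (2 * N : ℤ) ∣ ((k : ℤ) - j) then ((2 * N : ℕ) : ℂ) else 0) := by
        intro j _
        rw [← Finset.mul_sum, auxOrth N hN]
      rw [Finset.sum_congr rfl h2]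
      rw [Finset.sum_eq_single k]
      · rw [if_pos (by simp), mul_div_assoc, div_self h2N0, mul_one]
      · intro j hj hjk
        rw [Finset.mem_range] at hj
        have hnd : ¬ (2 * N : ℤ) ∣ ((k : ℤ) - j) := by
          intro hd
          have := Int.eq_zero_of_abs_lt_dvd hd (by
            rw [abs_sub_lt_iff]
            omega)
          omega
        rw [if_neg hnd, mul_zero]
      · intro hkk
        exact absurd (Finset.mem_range.mpr hk) hkk
    -- Part B
    have PB : ∑ ν ∈ Finset.range (2 * N),
        (starRingEnd ℂ) (c ν) * Complex.exp (Real.pi * Complex.I * k * ν / N) = f k := by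
      have h1 : ∀ ν ∈ Finset.range (2 * N),
          (starRingEnd ℂ) (c ν) * Complex.exp (Real.pi * Complex.I * k * ν / N)
            = (∑ j ∈ Finset.range (2 * N),
                (starRingEnd ℂ) (f j) * Complex.exp (Real.pi * Complex.I * ((((k : ℤ) + (j : ℤ)) : ℤ) : ℂ) / N) ^ ν)
              / ((2 * N : ℕ) : ℂ) := by
        intro ν _
        rw [hconj ν]
        rw [div_mul_eq_mul_div, Finset.sum_mul]
        congr 1
        refine Finset.sum_congr rfl fun j _ => ?_
        rw [mul_assoc, hB j ν]
      rw [Finset.sum_congr rfl h1, ← Finset.sum_div, Finset.sum_comm]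
      have h2 : ∀ j ∈ Finset.range (2 * N),
          ∑ ν ∈ Finset.range (2 * N),
              (starRingEnd ℂ) (f j) * Complex.exp (Real.pi * Complex.I * ((((k : ℤ) + (j : ℤ)) : ℤ) : ℂ) / N) ^ ν
            = (starRingEnd ℂ) (f j)
                * (if (2 * N : ℤ) ∣ ((k : ℤ) + (j : ℤ)) then ((2 * N : ℕ) : ℂ) else 0) := by
        intro j _
        rw [← Finset.mul_sum, auxOrth N hN]
      rw [Finset.sum_congr rfl h2]
      by_cases hk0 : k = 0
      · -- k = 0 : every summand vanishes, and f 0 = 0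
        subst hk0
        have hz : ∀ j ∈ Finset.range (2 * N),
            (starRingEnd ℂ) (f j)
              * (if (2 * N : ℤ) ∣ (((0 : ℕ) : ℤ) + (j : ℤ)) then ((2 * N : ℕ) : ℂ) else 0) = 0 := by
          intro j hj
          rw [Finset.mem_range] at hj
          by_cases hj0 : j = 0
          · subst hj0
            have : f 0 = 0 := by simp [hf]
            rw [this]
            simp
          · have hnd : ¬ (2 * N : ℤ) ∣ (((0 : ℕ) : ℤ) + (j : ℤ)) := by
              intro hd
              have := Int.eq_zero_of_abs_lt_dvd hd (by
                rw [abs_lt]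
                omega)
              omega
            rw [if_neg hnd, mul_zero]
        rw [Finset.sum_eq_zero hz]
        have : f 0 = 0 := by simp [hf]
        rw [this]
        simp
      · -- k ≠ 0 : only j = 2N - k contributes
        rw [Finset.sum_eq_single (2 * N - k)]
        · have hdvd : (2 * N : ℤ) ∣ ((k : ℤ) + ((2 * N - k : ℕ) : ℤ)) := ⟨1, by omega⟩
          rw [if_pos hdvd, mul_div_assoc, div_self h2N0, mul_one]
          -- conj (f (2N - k)) = f k
          by_cases hkN : k = N
          · have hN' : 2 * N - k = N := by omega
            rw [hN']
            simp [hf, hkN]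
          · by_cases hklt : k < N
            · have h1' : ¬(2 * N - k = 0 ∨ 2 * N - k = N) := by omega
              have h2' : ¬(2 * N - k < N) := by omega
              have h3' : ¬(k = 0 ∨ k = N) := by tauto
              simp only [hf, h1', h2', h3', if_false, hklt, if_true]
              simp
            · have h1' : ¬(2 * N - k = 0 ∨ 2 * N - k = N) := by omega
              have h2' : 2 * N - k < N := by omega
              have h3' : ¬(k = 0 ∨ k = N) := by tauto
              simp only [hf, h1', h2', h3', if_false, if_true, hklt]
              simp [Complex.conj_I]
        · intro j hj hjj0
          rw [Finset.mem_range] at hj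
          have hnd : ¬ (2 * N : ℤ) ∣ ((k : ℤ) + (j : ℤ)) := by
            intro hd
            obtain ⟨cq, hcq⟩ := hd
            have hcq0 : 0 ≤ cq := by nlinarith
            have hcq2 : cq < 2 := by nlinarith
            interval_cases cq <;> omega
          rw [if_neg hnd, mul_zero]
        · intro hkk
          exact absurd (Finset.mem_range.mpr (by omega : 2 * N - k < 2 * N)) hkk
    -- combine
    have hre : ∀ z : ℂ, ((z.re : ℝ) : ℂ) = (z + (starRingEnd ℂ) z) / 2 := by
      intro z
      rw [Complex.add_conj]
      push_cast
      ring
    have hgoal : ∀ ν ∈ Finset.range (2 * N),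
        (((c ν).re : ℝ) : ℂ) * Complex.exp ((k : ℂ) * (ν : ℂ) * (Real.pi : ℂ) * Complex.I / ((2 : ℂ) ^ m))
          = (c ν * Complex.exp (Real.pi * Complex.I * k * ν / N)
              + (starRingEnd ℂ) (c ν) * Complex.exp (Real.pi * Complex.I * k * ν / N)) / 2 := by
      intro ν _
      rw [hE ν, hre (c ν)]
      ring
    calc ∑ ν ∈ Finset.range (2 * 2 ^ m),
            (((c ν).re : ℝ) : ℂ) * Complex.exp ((k : ℂ) * (ν : ℂ) * (Real.pi : ℂ) * Complex.I / ((2 : ℂ) ^ m))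
        = ∑ ν ∈ Finset.range (2 * N),
            (c ν * Complex.exp (Real.pi * Complex.I * k * ν / N)
              + (starRingEnd ℂ) (c ν) * Complex.exp (Real.pi * Complex.I * k * ν / N)) / 2 :=
          Finset.sum_congr rfl hgoal
      _ = (∑ ν ∈ Finset.range (2 * N), c ν * Complex.exp (Real.pi * Complex.I * k * ν / N)
            + ∑ ν ∈ Finset.range (2 * N),
                (starRingEnd ℂ) (c ν) * Complex.exp (Real.pi * Complex.I * k * ν / N)) / 2 := by
          rw [← Finset.sum_div, Finset.sum_add_distrib]
      _ = (f k + f k) / 2 := by rw [PA, PB]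
      _ = f k := by ring
      _ = if k = 0 ∨ k = 2 ^ m then 0 else if k < 2 ^ m then Complex.I else -Complex.I := by
          rw [hf]
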